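/- Let $H \in \mathbb{C}^{js\times js}$ be block upper Hessenberg with invertible subdiagonal blocks, and let $\Lambda(z)$ be its block characteristic polynomial with respect to $E_1$ with leading coefficient $\Gamma_2^{-1}\cdots\Gamma_j^{-1}$. Then $H$ is a linearization of the matrix polynomial $\Lambda(z)$: there exist matrix functions $G(\lambda)$, $F(\lambda)$, invertible at every eigenvalue of $H$, such that $G(\lambda)(\lambda I - H)F(\lambda)$ has the block anti-triangular form with $\Lambda(\lambda)$ in the top-right block and the invertible block diagonal $-\Gamma_2, \ldots, -\Gamma_j$ below; in particular $\det(\lambda I - H) = c \cdot \det \Lambda(\lambda)$ for a nonzero constant $c$. -/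

import Mathlib

open Matrix Polynomial

abbrev Mat (s : ℕ) := Matrix (Fin s) (Fin s) ℂ

/-- The `(p,q)` block (of size `s × s`) of a `js × js` block matrix. -/
def blk {j s : ℕ} (H : Matrix (Fin j × Fin s) (Fin j × Fin s) ℂ) (p q : Fin j) :
    Mat s := Matrix.of fun a b => H (p, a) (q, b)

/-- The `i`-th block canonical vector `E_i = e_i ⊗ I_s`. -/
def blkE {j s : ℕ} (i : Fin j) : Matrix (Fin j × Fin s) (Fin s) ℂ :=
  Matrix.of fun pa b => if pa.1 = i ∧ pa.2 = b then 1 else 0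

/-- Block upper Hessenberg: all blocks strictly below the first subdiagonal vanish. -/
def BUH {j s : ℕ} (H : Matrix (Fin j × Fin s) (Fin j × Fin s) ℂ) : Prop :=
  ∀ p q : Fin j, (q : ℕ) + 1 < (p : ℕ) → blk H p q = 0

/-- The action `P(N) ∘ W := ∑ᵢ Nⁱ W Pᵢ` of a matrix polynomial on a block vector. -/
noncomputable def act {n : Type*} [Fintype n] [DecidableEq n] {s : ℕ}
    (P : Polynomial (Mat s)) (N : Matrix n n ℂ) (W : Matrix n (Fin s) ℂ) :
    Matrix n (Fin s) ℂ :=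
  ∑ i ∈ Finset.range (P.natDegree + 1), (N ^ i) * W * P.coeff i

/-- Evaluation of a matrix polynomial at a scalar: `P(z) = ∑ᵢ zⁱ Pᵢ`. -/
noncomputable def evalS {s : ℕ} (P : Polynomial (Mat s)) (z : ℂ) : Mat s :=
  ∑ i ∈ Finset.range (P.natDegree + 1), z ^ i • P.coeff i

/-- The subdiagonal block `Γ_i = H_{(i-1)(i-2)}` (paper indexing, `2 ≤ i ≤ j`),
with the convention `Γ_i = I` out of range (in particular `Γ₁ = I`). -/
noncomputable def Gam {j s : ℕ} (H : Matrix (Fin j × Fin s) (Fin j × Fin s) ℂ)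
    (i : ℕ) : Mat s :=
  if h : 2 ≤ i ∧ i ≤ j then blk H ⟨i - 1, by omega⟩ ⟨i - 2, by omega⟩ else 1

namespace HessAux

variable {j s : ℕ}

/-- block column of a `js × s` matrix -/
def blkc {j s : ℕ} (W : Matrix (Fin j × Fin s) (Fin s) ℂ) (p : Fin j) : Mat s :=
  Matrix.of fun a b => W (p, a) b

lemma blk_mul (A B : Matrix (Fin j × Fin s) (Fin j × Fin s) ℂ) (p q : Fin j) :
    blk (A * B) p q = ∑ r : Fin j, blk A p r * blk B r q := by
  ext a b
  simp [blk, Matrix.mul_apply, Matrix.sum_apply, Fintype.sum_prod_type]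

lemma blkc_mulmat (A : Matrix (Fin j × Fin s) (Fin j × Fin s) ℂ)
    (W : Matrix (Fin j × Fin s) (Fin s) ℂ) (p : Fin j) :
    blkc (A * W) p = ∑ r : Fin j, blk A p r * blkc W r := by
  ext a b
  simp [blk, blkc, Matrix.mul_apply, Matrix.sum_apply, Fintype.sum_prod_type]

lemma blkc_mulright (W : Matrix (Fin j × Fin s) (Fin s) ℂ) (C : Mat s) (p : Fin j) :
    blkc (W * C) p = blkc W p * C := by
  ext a b
  simp [blkc, Matrix.mul_apply]

lemma blkc_E0mul (i : Fin j) (X : Mat s) (p : Fin j) :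
    blkc (blkE (s := s) i * X) p = if p = i then X else 0 := by
  ext a b
  by_cases h : p = i <;>
    simp [blkc, blkE, Matrix.mul_apply, h, ite_and]

lemma blkc_E0 (i p : Fin j) :
    blkc (blkE (j := j) (s := s) i) p = if p = i then 1 else 0 := by
  have : blkE (j := j) (s := s) i = blkE (j := j) (s := s) i * (1 : Mat s) := by rw [Matrix.mul_one]
  rw [this, blkc_E0mul]

lemma blk_smul_one (z : ℂ) (p q : Fin j) :
    blk (z • (1 : Matrix (Fin j × Fin s) (Fin j × Fin s) ℂ)) p q =
      if p = q then z • (1 : Mat s) else 0 := by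
  ext a b
  by_cases h : p = q <;>
    simp [blk, Matrix.one_apply, h, Prod.ext_iff]

lemma blk_sub (A B : Matrix (Fin j × Fin s) (Fin j × Fin s) ℂ) (p q : Fin j) :
    blk (A - B) p q = blk A p q - blk B p q := rfl

lemma blk_add (A B : Matrix (Fin j × Fin s) (Fin j × Fin s) ℂ) (p q : Fin j) :
    blk (A + B) p q = blk A p q + blk B p q := rfl

lemma blk_one (p q : Fin j) :
    blk (1 : Matrix (Fin j × Fin s) (Fin j × Fin s) ℂ) p q =
      if p = q then 1 else 0 := by
  have := blk_smul_one (j := j) (s := s) 1 p q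
  simpa using this


/-- `Π_k = Γ_{k+1} ⋯ Γ₂` -/
noncomputable def PiG (H : Matrix (Fin j × Fin s) (Fin j × Fin s) ℂ) : ℕ → Mat s
  | 0 => 1
  | k + 1 => Gam H (k + 2) * PiG H k

lemma kry (H : Matrix (Fin j × Fin s) (Fin j × Fin s) ℂ) (hH : BUH H) (hj : 0 < j)
    (k : ℕ) :
    (∀ p : Fin j, k < (p : ℕ) → blkc (H ^ k * blkE (j := j) (s := s) (⟨0, hj⟩ : Fin j)) p = 0) ∧
    (∀ p : Fin j, (p : ℕ) = k → blkc (H ^ k * blkE (j := j) (s := s) (⟨0, hj⟩ : Fin j)) p = PiG H k) := by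
  induction k with
  | zero =>
    constructor
    · intro p hp
      rw [pow_zero, Matrix.one_mul, blkc_E0, if_neg]
      intro h; rw [h] at hp; simp at hp
    · intro p hp
      have : p = ⟨0, hj⟩ := Fin.ext hp
      rw [pow_zero, Matrix.one_mul, blkc_E0, if_pos this]
      rfl
  | succ k ih =>
    have hrw : H ^ (k+1) * blkE (j := j) (s := s) (⟨0, hj⟩ : Fin j) =
        H * (H ^ k * blkE (j := j) (s := s) (⟨0, hj⟩ : Fin j)) := by
      rw [pow_succ']; exact Matrix.mul_assoc _ _ _
    constructor
    · intro p hp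
      rw [hrw, blkc_mulmat]
      apply Finset.sum_eq_zero
      intro r _
      by_cases hr : (r : ℕ) + 1 < (p : ℕ)
      · rw [hH p r hr, zero_mul]
      · rw [ih.1 r (by omega), mul_zero]
    · intro p hp
      have hkj : k < j := by omega
      rw [hrw, blkc_mulmat]
      rw [Finset.sum_eq_single (⟨k, hkj⟩ : Fin j)]
      · rw [ih.2 ⟨k, hkj⟩ rfl]
        have hpe : p = ⟨k + 1, by omega⟩ := Fin.ext hp
        have hblk : blk H p ⟨k, hkj⟩ = Gam H (k + 2) := by
          rw [hpe, Gam, dif_pos ⟨by omega, by omega⟩]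
          rfl
        rw [hblk]; rfl
      · intro r _ hr
        have hrk : (r : ℕ) ≠ k := fun h => hr (Fin.ext h)
        by_cases hlt : (r : ℕ) < k
        · rw [hH p r (by omega), zero_mul]
        · rw [ih.1 r (by omega), mul_zero]
      · intro h; exact absurd (Finset.mem_univ _) h

def hblk (H : Matrix (Fin j × Fin s) (Fin j × Fin s) ℂ) (a : ℕ) (r : Fin j) : Mat s :=
  if h : a < j then blk H ⟨a, h⟩ r else 0

/-- back-substitution column: `vcol H z q p` is the `p`-th block of the `q`-th
column of `F`. -/
noncomputable def vcol (H : Matrix (Fin j × Fin s) (Fin j × Fin s) ℂ) (z : ℂ)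
    (q : ℕ) (p : ℕ) : Mat s :=
  if hq : q ≤ p then (if p = q then 1 else 0)
  else (Gam H (p + 2))⁻¹ *
    (z • vcol H z q (p + 1) -
      ∑ r : Fin j, if h : p < (r : ℕ) then hblk H (p + 1) r * vcol H z q (r : ℕ) else 0)
termination_by q - p
decreasing_by all_goals omega

lemma vcol_ge (H : Matrix (Fin j × Fin s) (Fin j × Fin s) ℂ) (z : ℂ) {q p : ℕ}
    (h : q ≤ p) : vcol H z q p = if p = q then 1 else 0 := by
  rw [vcol, dif_pos h]

lemma vcol_lt (H : Matrix (Fin j × Fin s) (Fin j × Fin s) ℂ) (z : ℂ) {q p : ℕ}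
    (h : p < q) :
    vcol H z q p = (Gam H (p + 2))⁻¹ *
      (z • vcol H z q (p + 1) -
        ∑ r : Fin j, if p < (r : ℕ) then hblk H (p + 1) r * vcol H z q (r : ℕ) else 0) := by
  rw [vcol, dif_neg (by omega)]
  simp only [dite_eq_ite]


lemma key_col (H : Matrix (Fin j × Fin s) (Fin j × Fin s) ℂ) (hH : BUH H)
    (hinv : ∀ i : ℕ, 2 ≤ i → i ≤ j → IsUnit (Gam H i)) (z : ℂ)
    {q : Fin j} (hq : (q : ℕ) + 1 < j) (p : Fin j) (hp : 1 ≤ (p : ℕ)) :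
    ∑ r : Fin j, blk (z • 1 - H) p r * vcol H z (q : ℕ) (r : ℕ)
      = if (p : ℕ) = (q : ℕ) + 1 then -(Gam H ((q : ℕ) + 2)) else 0 := by
  have h1 : ∀ r : Fin j, blk (z • (1 : Matrix (Fin j × Fin s) (Fin j × Fin s) ℂ) - H) p r
      * vcol H z (q : ℕ) (r : ℕ)
      = (if p = r then z • vcol H z (q : ℕ) (r : ℕ) else 0)
        - blk H p r * vcol H z (q : ℕ) (r : ℕ) := by
    intro r
    rw [blk_sub, blk_smul_one, sub_mul]
    congr 1
    by_cases h : p = r <;> simp [h, Matrix.smul_mul]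
  rw [Finset.sum_congr rfl fun r _ => h1 r, Finset.sum_sub_distrib]
  rw [Finset.sum_ite_eq Finset.univ p (fun r => z • vcol H z (q : ℕ) (r : ℕ)),
    if_pos (Finset.mem_univ p)]
  rcases Nat.lt_trichotomy (p : ℕ) ((q : ℕ) + 1) with hcc | hc | hcb
  · -- 1 ≤ p ≤ q
    have hpq : (p : ℕ) ≤ (q : ℕ) := by omega
    set pm : Fin j := ⟨(p : ℕ) - 1, by omega⟩ with hpm
    have hΓ : IsUnit (Gam H ((p : ℕ) + 1)).det :=
      (Matrix.isUnit_iff_isUnit_det _).mp (hinv _ (by omega) (by omega))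
    have hsplit2 : ∀ r : Fin j, blk H p r * vcol H z (q : ℕ) (r : ℕ) =
        (if pm = r then blk H p pm * vcol H z (q : ℕ) ((p : ℕ) - 1) else 0)
        + (if (p : ℕ) - 1 < (r : ℕ) then
            hblk H ((p : ℕ) - 1 + 1) r * vcol H z (q : ℕ) (r : ℕ) else 0) := by
      intro r
      by_cases hr1 : pm = r
      · rw [if_pos hr1, if_neg (by rw [← hr1]; simp [hpm]), add_zero, ← hr1]
      · rw [if_neg hr1, zero_add]
        have hrv : (r : ℕ) ≠ (p : ℕ) - 1 := fun h => hr1 (Fin.ext (by simp [hpm, h]))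
        by_cases hr2 : (p : ℕ) - 1 < (r : ℕ)
        · rw [if_pos hr2]
          have e2 : (p : ℕ) - 1 + 1 = (p : ℕ) := by omega
          rw [e2, hblk, dif_pos p.isLt]
        · rw [if_neg hr2, hH p r (by omega), zero_mul]
    rw [Finset.sum_congr rfl fun r _ => hsplit2 r, Finset.sum_add_distrib,
      Finset.sum_ite_eq Finset.univ pm
        (fun _ => blk H p pm * vcol H z (q : ℕ) ((p : ℕ) - 1)),
      if_pos (Finset.mem_univ pm)]
    have hv := vcol_lt H z (q := (q : ℕ)) (p := (p : ℕ) - 1) (by omega)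
    have e1 : (p : ℕ) - 1 + 2 = (p : ℕ) + 1 := by omega
    have e2 : (p : ℕ) - 1 + 1 = (p : ℕ) := by omega
    rw [e1, e2] at hv
    have hbg : blk H p pm = Gam H ((p : ℕ) + 1) := by
      rw [Gam, dif_pos ⟨by omega, by omega⟩]
      congr 1 <;> exact Fin.ext (by simp; omega)
    rw [e2, hv, hbg, ← Matrix.mul_assoc, Matrix.mul_nonsing_inv _ hΓ, Matrix.one_mul]
    rw [if_neg (by omega)]
    abel
  · -- p = q + 1
    have hvp : vcol H z (q : ℕ) (p : ℕ) = 0 := by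
      rw [vcol_ge H z (by omega), if_neg (by omega)]
    have hS : ∑ r : Fin j, blk H p r * vcol H z (q : ℕ) (r : ℕ)
        = Gam H ((q : ℕ) + 2) := by
      rw [Finset.sum_eq_single q]
      · rw [vcol_ge H z (le_refl _), if_pos rfl, Matrix.mul_one]
        have hpe : p = ⟨(q : ℕ) + 1, by omega⟩ := Fin.ext hc
        rw [hpe, Gam, dif_pos ⟨by omega, by omega⟩]
        rfl
      · intro r _ hr
        have hrq : (r : ℕ) ≠ (q : ℕ) := fun h => hr (Fin.ext h)
        by_cases hlt : (r : ℕ) < (q : ℕ)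
        · rw [hH p r (by omega), zero_mul]
        · rw [vcol_ge H z (by omega), if_neg (by omega), mul_zero]
      · intro h; exact absurd (Finset.mem_univ _) h
    rw [hS, hvp, smul_zero, zero_sub, if_pos hc]
  · -- p > q + 1
    have hvp : vcol H z (q : ℕ) (p : ℕ) = 0 := by
      rw [vcol_ge H z (by omega), if_neg (by omega)]
    have hS : ∑ r : Fin j, blk H p r * vcol H z (q : ℕ) (r : ℕ) = 0 := by
      apply Finset.sum_eq_zero
      intro r _
      by_cases hlt : (r : ℕ) + 1 < (p : ℕ)
      · rw [hH p r hlt, zero_mul]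
      · rw [vcol_ge H z (by omega), if_neg (by omega), mul_zero]
    rw [hS, hvp, smul_zero, zero_sub, neg_zero, if_neg (by omega)]


/-- the Horner column -/
noncomputable def hcol (hj : 0 < j) (Λ : Polynomial (Mat s))
    (H : Matrix (Fin j × Fin s) (Fin j × Fin s) ℂ) (z : ℂ) :
    Matrix (Fin j × Fin s) (Fin s) ℂ :=
  ∑ i ∈ Finset.range (Λ.natDegree + 1), ∑ k ∈ Finset.range i,
    z ^ (i - 1 - k) • (H ^ k * blkE (j := j) (s := s) (⟨0, hj⟩ : Fin j) * Λ.coeff i)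

lemma M_mul_hcol (hj : 0 < j) (Λ : Polynomial (Mat s))
    (H : Matrix (Fin j × Fin s) (Fin j × Fin s) ℂ) (z : ℂ)
    (hann : act Λ H (blkE (j := j) (s := s) (⟨0, hj⟩ : Fin j)) = 0) :
    (z • 1 - H) * hcol hj Λ H z = blkE (j := j) (s := s) (⟨0, hj⟩ : Fin j) * evalS Λ z := by
  rw [hcol, Matrix.mul_sum]
  have hinner : ∀ i ∈ Finset.range (Λ.natDegree + 1),
      (z • (1 : Matrix (Fin j × Fin s) (Fin j × Fin s) ℂ) - H) *
        ∑ k ∈ Finset.range i, z ^ (i - 1 - k) • (H ^ k * blkE (j := j) (s := s) (⟨0, hj⟩ : Fin j) * Λ.coeff i)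
      = z ^ i • (blkE (j := j) (s := s) (⟨0, hj⟩ : Fin j) * Λ.coeff i)
        - H ^ i * blkE (j := j) (s := s) (⟨0, hj⟩ : Fin j) * Λ.coeff i := by
    intro i _
    rw [Matrix.mul_sum]
    have hterm : ∀ k ∈ Finset.range i,
        (z • (1 : Matrix (Fin j × Fin s) (Fin j × Fin s) ℂ) - H) *
          (z ^ (i - 1 - k) • (H ^ k * blkE (j := j) (s := s) (⟨0, hj⟩ : Fin j) * Λ.coeff i))
        = z ^ (i - k) • (H ^ k * blkE (j := j) (s := s) (⟨0, hj⟩ : Fin j) * Λ.coeff i)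
          - z ^ (i - (k + 1)) • (H ^ (k + 1) * blkE (j := j) (s := s) (⟨0, hj⟩ : Fin j) * Λ.coeff i) := by
      intro k hk
      have hki : k < i := Finset.mem_range.mp hk
      rw [Matrix.sub_mul, Matrix.mul_smul, Matrix.mul_smul, Matrix.smul_mul,
        Matrix.one_mul, smul_smul, ← pow_succ]
      have e1 : i - 1 - k + 1 = i - k := by omega
      have e2 : i - (k + 1) = i - 1 - k := by omega
      rw [e1, e2]
      congr 2
      rw [pow_succ', Matrix.mul_assoc, Matrix.mul_assoc, Matrix.mul_assoc]
    rw [Finset.sum_congr rfl hterm, Finset.sum_range_sub']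
    rw [Nat.sub_zero, Nat.sub_self, pow_zero, pow_zero, one_smul, Matrix.one_mul]
  rw [Finset.sum_congr rfl hinner, Finset.sum_sub_distrib]
  have : ∑ i ∈ Finset.range (Λ.natDegree + 1),
      H ^ i * blkE (j := j) (s := s) (⟨0, hj⟩ : Fin j) * Λ.coeff i = 0 := hann
  rw [this, sub_zero, evalS, Matrix.mul_sum]
  apply Finset.sum_congr rfl
  intro i _
  rw [Matrix.mul_smul]

lemma PiG_prod (H : Matrix (Fin j × Fin s) (Fin j × Fin s) ℂ)
    (hinv : ∀ i : ℕ, 2 ≤ i → i ≤ j → IsUnit (Gam H i)) :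
    ∀ k, k ≤ j - 1 →
      PiG H k * ((List.range k).map fun m => (Gam H (m + 2))⁻¹).prod = 1 := by
  intro k
  induction k with
  | zero => intro _; simp [PiG]
  | succ k ih =>
    intro hk
    have hk' : k ≤ j - 1 := by omega
    have hunit : IsUnit (Gam H (k + 2)).det :=
      (Matrix.isUnit_iff_isUnit_det _).mp (hinv _ (by omega) (by omega))
    rw [List.range_succ, List.map_append, List.prod_append, List.map_singleton,
      List.prod_singleton, PiG]
    calc Gam H (k + 2) * PiG H k *
          (((List.range k).map fun m => (Gam H (m + 2))⁻¹).prod * (Gam H (k + 2))⁻¹)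
        = Gam H (k + 2) *
            ((PiG H k * ((List.range k).map fun m => (Gam H (m + 2))⁻¹).prod) *
              (Gam H (k + 2))⁻¹) := by
          rw [Matrix.mul_assoc, Matrix.mul_assoc]
      _ = 1 := by rw [ih hk', Matrix.one_mul, Matrix.mul_nonsing_inv _ hunit]

lemma blkc_hcol_last (hj : 0 < j) (Λ : Polynomial (Mat s))
    (H : Matrix (Fin j × Fin s) (Fin j × Fin s) ℂ) (hH : BUH H)
    (hinv : ∀ i : ℕ, 2 ≤ i → i ≤ j → IsUnit (Gam H i))
    (hdeg : Λ.natDegree = j)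
    (hlead : Λ.leadingCoeff =
      ((List.range (j - 1)).map (fun m => (Gam H (m + 2))⁻¹)).prod) (z : ℂ) :
    blkc (hcol hj Λ H z) ⟨j - 1, Nat.sub_lt hj Nat.one_pos⟩ = 1 := by
  have hb : ∀ (W : Finset ℕ) (f : ℕ → Matrix (Fin j × Fin s) (Fin s) ℂ) (p : Fin j),
      blkc (∑ i ∈ W, f i) p = ∑ i ∈ W, blkc (f i) p := by
    intro W f p
    ext a b
    simp [blkc, Matrix.sum_apply]
  have hsm : ∀ (c : ℂ) (W : Matrix (Fin j × Fin s) (Fin s) ℂ) (p : Fin j),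
      blkc (c • W) p = c • blkc W p := by
    intro c W p; ext a b; simp [blkc]
  rw [hcol, hb]
  rw [Finset.sum_eq_single Λ.natDegree]
  · rw [hb, Finset.sum_eq_single (j - 1)]
    · rw [hsm, blkc_mulright, (kry H hH hj (j - 1)).2 ⟨j - 1, by omega⟩ rfl]
      have : Λ.coeff Λ.natDegree = Λ.leadingCoeff := rfl
      rw [hdeg] at this ⊢
      rw [this, hlead, Nat.sub_self, pow_zero, one_smul]
      exact PiG_prod H hinv (j - 1) (le_refl _)
    · intro k hk hkne
      have hkj : k < j := by rw [hdeg] at hk; exact Finset.mem_range.mp hk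
      rw [hsm, blkc_mulright, (kry H hH hj k).1 ⟨j - 1, by omega⟩ (by simp; omega),
        zero_mul, smul_zero]
    · intro hnot
      rw [hdeg] at hnot
      exact absurd (Finset.mem_range.mpr (by omega)) hnot
  · intro i hi hine
    have hij : i < Λ.natDegree + 1 := Finset.mem_range.mp hi
    rw [hb]
    apply Finset.sum_eq_zero
    intro k hk
    have hki : k < i := Finset.mem_range.mp hk
    have : k < j - 1 := by omega
    rw [hsm, blkc_mulright, (kry H hH hj k).1 ⟨j - 1, by omega⟩ (by simp; omega),
      zero_mul, smul_zero]
  · intro hnot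
    exact absurd (Finset.mem_range.mpr (by omega)) hnot


noncomputable def Fm (hj : 0 < j) (Λ : Polynomial (Mat s))
    (H : Matrix (Fin j × Fin s) (Fin j × Fin s) ℂ) (z : ℂ) :
    Matrix (Fin j × Fin s) (Fin j × Fin s) ℂ :=
  Matrix.of fun x y =>
    if ((y.1 : ℕ) = j - 1) then hcol hj Λ H z x y.2
    else vcol H z (y.1 : ℕ) (x.1 : ℕ) x.2 y.2

lemma blk_Fm_last (hj : 0 < j) (Λ : Polynomial (Mat s))
    (H : Matrix (Fin j × Fin s) (Fin j × Fin s) ℂ) (z : ℂ) (p : Fin j)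
    {h : j - 1 < j} :
    blk (Fm hj Λ H z) p ⟨j - 1, h⟩ = blkc (hcol hj Λ H z) p := by
  ext a b
  simp [blk, blkc, Fm]

lemma blk_Fm_mid (hj : 0 < j) (Λ : Polynomial (Mat s))
    (H : Matrix (Fin j × Fin s) (Fin j × Fin s) ℂ) (z : ℂ) (p : Fin j)
    {q : Fin j} (hq : (q : ℕ) < j - 1) :
    blk (Fm hj Λ H z) p q = vcol H z (q : ℕ) (p : ℕ) := by
  ext a b
  simp [blk, Fm, Nat.ne_of_lt hq]

lemma blk_P_last (hj : 0 < j) (Λ : Polynomial (Mat s))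
    (H : Matrix (Fin j × Fin s) (Fin j × Fin s) ℂ) (z : ℂ)
    (hann : act Λ H (blkE (⟨0, hj⟩ : Fin j)) = 0) (p : Fin j) {h : j - 1 < j} :
    blk ((z • 1 - H) * Fm hj Λ H z) p ⟨j - 1, h⟩ =
      if (p : ℕ) = 0 then evalS Λ z else 0 := by
  rw [blk_mul]
  have : ∀ r : Fin j, blk (z • 1 - H) p r * blk (Fm hj Λ H z) r ⟨j - 1, h⟩
      = blk (z • 1 - H) p r * blkc (hcol hj Λ H z) r := by
    intro r; rw [blk_Fm_last]
  rw [Finset.sum_congr rfl fun r _ => this r, ← blkc_mulmat, M_mul_hcol hj Λ H z hann,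
    blkc_E0mul]
  by_cases hp : p = ⟨0, hj⟩
  · rw [if_pos hp, if_pos (by rw [hp])]
  · rw [if_neg hp, if_neg (fun hc => hp (Fin.ext hc))]

lemma blk_P_mid (hj : 0 < j) (Λ : Polynomial (Mat s))
    (H : Matrix (Fin j × Fin s) (Fin j × Fin s) ℂ) (hH : BUH H)
    (hinv : ∀ i : ℕ, 2 ≤ i → i ≤ j → IsUnit (Gam H i)) (z : ℂ)
    {q : Fin j} (hq : (q : ℕ) < j - 1) (p : Fin j) (hp : 1 ≤ (p : ℕ)) :
    blk ((z • 1 - H) * Fm hj Λ H z) p q =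
      if (p : ℕ) = (q : ℕ) + 1 then -(Gam H ((q : ℕ) + 2)) else 0 := by
  rw [blk_mul]
  have : ∀ r : Fin j, blk (z • 1 - H) p r * blk (Fm hj Λ H z) r q
      = blk (z • 1 - H) p r * vcol H z (q : ℕ) (r : ℕ) := by
    intro r; rw [blk_Fm_mid hj Λ H z r hq]
  rw [Finset.sum_congr rfl fun r _ => this r]
  exact key_col H hH hinv z (by omega) p hp

noncomputable def Gm (hj : 0 < j) (Λ : Polynomial (Mat s))
    (H : Matrix (Fin j × Fin s) (Fin j × Fin s) ℂ) (z : ℂ) :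
    Matrix (Fin j × Fin s) (Fin j × Fin s) ℂ :=
  1 + Matrix.of fun x y =>
    if (x.1 : ℕ) = 0 ∧ 1 ≤ (y.1 : ℕ) then
      ((blk ((z • 1 - H) * Fm hj Λ H z) ⟨0, hj⟩
          ⟨(y.1 : ℕ) - 1, lt_of_le_of_lt (Nat.sub_le _ _) y.1.isLt⟩ *
        (Gam H ((y.1 : ℕ) + 1))⁻¹ : Mat s)) x.2 y.2
    else 0

lemma blk_Gm (hj : 0 < j) (Λ : Polynomial (Mat s))
    (H : Matrix (Fin j × Fin s) (Fin j × Fin s) ℂ) (z : ℂ) (p r : Fin j) :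
    blk (Gm hj Λ H z) p r = (if p = r then 1 else 0) +
      (if (p : ℕ) = 0 ∧ 1 ≤ (r : ℕ) then
        blk ((z • 1 - H) * Fm hj Λ H z) ⟨0, hj⟩
            ⟨(r : ℕ) - 1, lt_of_le_of_lt (Nat.sub_le _ _) r.isLt⟩ *
          (Gam H ((r : ℕ) + 1))⁻¹
       else 0) := by
  rw [Gm, blk_add, blk_one]
  congr 1
  ext a b
  by_cases hc : (p : ℕ) = 0 ∧ 1 ≤ (r : ℕ) <;> simp [blk, hc]


lemma blk_GMF (hj : 0 < j) (Λ : Polynomial (Mat s))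
    (H : Matrix (Fin j × Fin s) (Fin j × Fin s) ℂ) (hH : BUH H)
    (hinv : ∀ i : ℕ, 2 ≤ i → i ≤ j → IsUnit (Gam H i))
    (hann : act Λ H (blkE (⟨0, hj⟩ : Fin j)) = 0) (z : ℂ) (p q : Fin j) :
    blk (Gm hj Λ H z * ((z • 1 - H) * Fm hj Λ H z)) p q =
      if (p : ℕ) = ((q : ℕ) + 1) % j then
        (if (p : ℕ) = 0 then evalS Λ z else -(Gam H ((p : ℕ) + 1))) else 0 := by
  set P := (z • 1 - H) * Fm hj Λ H z with hP
  rw [blk_mul]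
  have hsp : ∀ r : Fin j, blk (Gm hj Λ H z) p r * blk P r q
      = (if p = r then blk P r q else 0) +
        (if (p : ℕ) = 0 ∧ 1 ≤ (r : ℕ) then
          (blk P ⟨0, hj⟩ ⟨(r : ℕ) - 1, lt_of_le_of_lt (Nat.sub_le _ _) r.isLt⟩ *
            (Gam H ((r : ℕ) + 1))⁻¹) * blk P r q
         else 0) := by
    intro r
    rw [blk_Gm, add_mul]
    congr 1
    · by_cases h : p = r <;> simp [h]
    · by_cases h : (p : ℕ) = 0 ∧ 1 ≤ (r : ℕ) <;> simp [h, hP]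
  rw [Finset.sum_congr rfl fun r _ => hsp r, Finset.sum_add_distrib,
    Finset.sum_ite_eq Finset.univ p (fun r => blk P r q), if_pos (Finset.mem_univ p)]
  by_cases hp0 : (p : ℕ) = 0
  · -- p = 0
    by_cases hql : (q : ℕ) = j - 1
    · have hqe : q = ⟨j - 1, by omega⟩ := Fin.ext hql
      have hmod : ((q : ℕ) + 1) % j = 0 := by
        rw [show (q : ℕ) + 1 = j by omega, Nat.mod_self]
      have hz : ∑ r : Fin j, (if (p : ℕ) = 0 ∧ 1 ≤ (r : ℕ) then
          (blk P ⟨0, hj⟩ ⟨(r : ℕ) - 1, lt_of_le_of_lt (Nat.sub_le _ _) r.isLt⟩ *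
            (Gam H ((r : ℕ) + 1))⁻¹) * blk P r q
         else 0) = 0 := by
        apply Finset.sum_eq_zero
        intro r _
        by_cases hr : 1 ≤ (r : ℕ)
        · rw [if_pos ⟨hp0, hr⟩, hqe, hP, blk_P_last hj Λ H z hann, if_neg (by omega),
            mul_zero]
        · rw [if_neg (by tauto)]
      rw [hmod, if_pos hp0, if_pos hp0, hz, add_zero, hqe, hP,
        blk_P_last hj Λ H z hann, if_pos hp0]
    · have hqm : (q : ℕ) < j - 1 := by have := q.isLt; omega
      have hmod : ((q : ℕ) + 1) % j = (q : ℕ) + 1 := Nat.mod_eq_of_lt (by omega)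
      have hΓ : IsUnit (Gam H ((q : ℕ) + 2)).det :=
        (Matrix.isUnit_iff_isUnit_det _).mp (hinv _ (by omega) (by omega))
      set r1 : Fin j := ⟨(q : ℕ) + 1, by omega⟩ with hr1
      have hz : ∑ r : Fin j, (if (p : ℕ) = 0 ∧ 1 ≤ (r : ℕ) then
          (blk P ⟨0, hj⟩ ⟨(r : ℕ) - 1, lt_of_le_of_lt (Nat.sub_le _ _) r.isLt⟩ *
            (Gam H ((r : ℕ) + 1))⁻¹) * blk P r q
         else 0) = -(blk P ⟨0, hj⟩ q) := by
        rw [Finset.sum_eq_single r1]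
        · rw [if_pos ⟨hp0, by simp [hr1]⟩, hP,
            blk_P_mid hj Λ H hH hinv z hqm r1 (by simp [hr1]),
            if_pos (by simp [hr1])]
          have he : (⟨(r1 : ℕ) - 1, lt_of_le_of_lt (Nat.sub_le _ _) r1.isLt⟩ : Fin j)
              = q := Fin.ext (by simp [hr1])
          rw [he]
          rw [Matrix.mul_assoc, Matrix.mul_neg, Matrix.mul_neg,
            Matrix.nonsing_inv_mul _ hΓ, Matrix.mul_one]
        · intro r _ hr
          by_cases hge : 1 ≤ (r : ℕ)
          · rw [if_pos ⟨hp0, hge⟩, hP, blk_P_mid hj Λ H hH hinv z hqm r hge,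
              if_neg (fun hc => hr (Fin.ext (by simp [hr1, hc]))), mul_zero]
          · rw [if_neg (by tauto)]
        · intro h; exact absurd (Finset.mem_univ _) h
      have hpe : p = ⟨0, hj⟩ := Fin.ext hp0
      rw [hmod, if_neg (by simp [hp0]), hz, hpe, add_neg_cancel]
  · -- p ≥ 1
    have hz : ∑ r : Fin j, (if (p : ℕ) = 0 ∧ 1 ≤ (r : ℕ) then
        (blk P ⟨0, hj⟩ ⟨(r : ℕ) - 1, lt_of_le_of_lt (Nat.sub_le _ _) r.isLt⟩ *
          (Gam H ((r : ℕ) + 1))⁻¹) * blk P r q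
       else 0) = 0 := by
      apply Finset.sum_eq_zero
      intro r _
      rw [if_neg (by tauto)]
    rw [hz, add_zero]
    by_cases hql : (q : ℕ) = j - 1
    · have hqe : q = ⟨j - 1, by omega⟩ := Fin.ext hql
      have hmod : ((q : ℕ) + 1) % j = 0 := by
        rw [show (q : ℕ) + 1 = j by omega, Nat.mod_self]
      rw [hmod, if_neg hp0, hqe, hP, blk_P_last hj Λ H z hann, if_neg hp0]
    · have hqm : (q : ℕ) < j - 1 := by have := q.isLt; omega
      have hmod : ((q : ℕ) + 1) % j = (q : ℕ) + 1 := Nat.mod_eq_of_lt (by omega)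
      rw [hP, blk_P_mid hj Λ H hH hinv z hqm p (by omega), hmod]
      by_cases hpq : (p : ℕ) = (q : ℕ) + 1
      · rw [if_pos hpq, if_pos hpq, if_neg hp0,
          show (p : ℕ) + 1 = (q : ℕ) + 2 by omega]
      · rw [if_neg hpq, if_neg hpq]


lemma tri_det_one (A : Matrix (Fin j × Fin s) (Fin j × Fin s) ℂ)
    (hlow : ∀ x y : Fin j × Fin s, (y.1 : ℕ) < (x.1 : ℕ) → A x y = 0)
    (hdiag : ∀ (q : Fin j) (a b : Fin s), A (q, a) (q, b) = if a = b then 1 else 0) :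
    A.det = 1 := by
  have hbt : A.BlockTriangular (fun x : Fin j × Fin s => (x.1 : ℕ)) :=
    fun x y h => hlow x y h
  rw [hbt.det]
  apply Finset.prod_eq_one
  intro k _
  have hone : A.toSquareBlock (fun x : Fin j × Fin s => (x.1 : ℕ)) k = 1 := by
    ext x y
    obtain ⟨⟨xp, xa⟩, hx⟩ := x
    obtain ⟨⟨yp, ya⟩, hy⟩ := y
    have hpy : xp = yp := Fin.ext (by simp only at hx hy; omega)
    subst hpy
    simp only [Matrix.toSquareBlock, Matrix.toSquareBlockProp, Matrix.submatrix_apply,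
      Matrix.toBlock_apply, Matrix.one_apply, Subtype.mk.injEq, Prod.mk.injEq]
    rw [hdiag]
    by_cases hab : xa = ya <;> simp [hab]
  rw [hone, Matrix.det_one]

lemma F_low (hj : 0 < j) (Λ : Polynomial (Mat s))
    (H : Matrix (Fin j × Fin s) (Fin j × Fin s) ℂ) (z : ℂ) :
    ∀ x y : Fin j × Fin s, (y.1 : ℕ) < (x.1 : ℕ) → Fm hj Λ H z x y = 0 := by
  intro x y hxy
  have hy : (y.1 : ℕ) ≠ j - 1 := by have := x.1.isLt; omega
  show (if ((y.1 : ℕ) = j - 1) then hcol hj Λ H z x y.2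
    else vcol H z (y.1 : ℕ) (x.1 : ℕ) x.2 y.2) = 0
  rw [if_neg hy, vcol_ge H z (by omega), if_neg (by omega)]
  rfl

lemma F_diag (hj : 0 < j) (Λ : Polynomial (Mat s))
    (H : Matrix (Fin j × Fin s) (Fin j × Fin s) ℂ) (hH : BUH H)
    (hinv : ∀ i : ℕ, 2 ≤ i → i ≤ j → IsUnit (Gam H i))
    (hdeg : Λ.natDegree = j)
    (hlead : Λ.leadingCoeff =
      ((List.range (j - 1)).map (fun m => (Gam H (m + 2))⁻¹)).prod) (z : ℂ) :
    ∀ (q : Fin j) (a b : Fin s),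
      Fm hj Λ H z (q, a) (q, b) = if a = b then 1 else 0 := by
  intro q a b
  show (if ((q : ℕ) = j - 1) then hcol hj Λ H z (q, a) b
    else vcol H z (q : ℕ) (q : ℕ) a b) = if a = b then 1 else 0
  by_cases hq : (q : ℕ) = j - 1
  · rw [if_pos hq]
    have hqe : q = ⟨j - 1, by omega⟩ := Fin.ext hq
    have := blkc_hcol_last hj Λ H hH hinv hdeg hlead z
    have h2 : blkc (hcol hj Λ H z) ⟨j - 1, by omega⟩ a b = (1 : Mat s) a b := by
      rw [this]
    rw [hqe]
    rw [Matrix.one_apply] at h2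
    exact h2
  · rw [if_neg hq, vcol_ge H z (le_refl _), if_pos rfl, Matrix.one_apply]

lemma G_low (hj : 0 < j) (Λ : Polynomial (Mat s))
    (H : Matrix (Fin j × Fin s) (Fin j × Fin s) ℂ) (z : ℂ) :
    ∀ x y : Fin j × Fin s, (y.1 : ℕ) < (x.1 : ℕ) → Gm hj Λ H z x y = 0 := by
  intro x y hxy
  rw [Gm, Matrix.add_apply, Matrix.one_apply_ne
    (fun hc => by rw [hc] at hxy; omega), Matrix.of_apply,
    if_neg (by omega), add_zero]

lemma G_diag (hj : 0 < j) (Λ : Polynomial (Mat s))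
    (H : Matrix (Fin j × Fin s) (Fin j × Fin s) ℂ) (z : ℂ) :
    ∀ (q : Fin j) (a b : Fin s),
      Gm hj Λ H z (q, a) (q, b) = if a = b then 1 else 0 := by
  intro q a b
  rw [Gm, Matrix.add_apply, Matrix.of_apply,
    if_neg (fun h => by simp only [Prod.fst] at h; omega), add_zero, Matrix.one_apply]
  by_cases hab : a = b <;> simp [hab, Prod.ext_iff]

lemma F_det (hj : 0 < j) (Λ : Polynomial (Mat s))
    (H : Matrix (Fin j × Fin s) (Fin j × Fin s) ℂ) (hH : BUH H)
    (hinv : ∀ i : ℕ, 2 ≤ i → i ≤ j → IsUnit (Gam H i))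
    (hdeg : Λ.natDegree = j)
    (hlead : Λ.leadingCoeff =
      ((List.range (j - 1)).map (fun m => (Gam H (m + 2))⁻¹)).prod) (z : ℂ) :
    (Fm hj Λ H z).det = 1 :=
  tri_det_one _ (F_low hj Λ H z) (F_diag hj Λ H hH hinv hdeg hlead z)

lemma G_det (hj : 0 < j) (Λ : Polynomial (Mat s))
    (H : Matrix (Fin j × Fin s) (Fin j × Fin s) ℂ) (z : ℂ) :
    (Gm hj Λ H z).det = 1 :=
  tri_det_one _ (G_low hj Λ H z) (G_diag hj Λ H z)


lemma val_finRotate (hj : 0 < j) (i : Fin j) :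
    ((finRotate j i : Fin j) : ℕ) = ((i : ℕ) + 1) % j := by
  cases j with
  | zero => exact i.elim0
  | succ m =>
    rw [finRotate_succ_apply, Fin.val_add]
    conv_rhs => rw [Nat.add_mod]
    rw [Nat.mod_eq_of_lt i.isLt]
    rfl

noncomputable def Dmat (hj : 0 < j) (Λ : Polynomial (Mat s))
    (H : Matrix (Fin j × Fin s) (Fin j × Fin s) ℂ) (z : ℂ) :
    Matrix (Fin j × Fin s) (Fin j × Fin s) ℂ :=
  Matrix.of fun x y =>
    if x.1 = y.1 then
      ((if (x.1 : ℕ) = 0 then evalS Λ z else -(Gam H ((x.1 : ℕ) + 1))) : Mat s) x.2 y.2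
    else 0

lemma GMF_eq (hj : 0 < j) (Λ : Polynomial (Mat s))
    (H : Matrix (Fin j × Fin s) (Fin j × Fin s) ℂ) (hH : BUH H)
    (hinv : ∀ i : ℕ, 2 ≤ i → i ≤ j → IsUnit (Gam H i))
    (hann : act Λ H (blkE (⟨0, hj⟩ : Fin j)) = 0) (z : ℂ) :
    Gm hj Λ H z * ((z • 1 - H) * Fm hj Λ H z) =
      (Dmat hj Λ H z).submatrix id
        (Equiv.prodCongr (finRotate j) (Equiv.refl (Fin s))) := by
  ext x y
  have hb := blk_GMF hj Λ H hH hinv hann z x.1 y.1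
  have hentry : (Gm hj Λ H z * ((z • 1 - H) * Fm hj Λ H z)) x y
      = blk (Gm hj Λ H z * ((z • 1 - H) * Fm hj Λ H z)) x.1 y.1 x.2 y.2 := rfl
  rw [hentry, hb]
  rw [Matrix.submatrix_apply, id_eq]
  show _ = Dmat hj Λ H z x (finRotate j y.1, y.2)
  rw [Dmat, Matrix.of_apply]
  by_cases hc : (x.1 : ℕ) = ((y.1 : ℕ) + 1) % j
  · rw [if_pos hc, if_pos (Fin.ext (by rw [val_finRotate hj]; exact hc))]
  · rw [if_neg hc,
      if_neg (fun h => hc (by rw [← val_finRotate hj y.1]; exact congrArg Fin.val h))]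
    rfl

lemma det_Dmat (hj : 0 < j) (Λ : Polynomial (Mat s))
    (H : Matrix (Fin j × Fin s) (Fin j × Fin s) ℂ) (z : ℂ) :
    (Dmat hj Λ H z).det = (evalS Λ z).det *
      ∏ p ∈ Finset.univ.erase (⟨0, hj⟩ : Fin j), (-(Gam H ((p : ℕ) + 1))).det := by
  have hD : Dmat hj Λ H z =
      (Matrix.blockDiagonal fun p : Fin j =>
        ((if (p : ℕ) = 0 then evalS Λ z else -(Gam H ((p : ℕ) + 1))) : Mat s)).submatrix
        (Equiv.prodComm (Fin j) (Fin s)) (Equiv.prodComm (Fin j) (Fin s)) := by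
    ext x y
    rw [Dmat, Matrix.of_apply, Matrix.submatrix_apply]
    rw [Equiv.prodComm_apply, Equiv.prodComm_apply]
    rw [Matrix.blockDiagonal_apply]
    by_cases hc : x.1 = y.1
    · rw [if_pos hc, if_pos (show x.swap.2 = y.swap.2 from hc)]
      rfl
    · rw [if_neg hc, if_neg (show ¬x.swap.2 = y.swap.2 from hc)]
  rw [hD, Matrix.det_submatrix_equiv_self, Matrix.det_blockDiagonal]
  rw [← Finset.mul_prod_erase Finset.univ _ (Finset.mem_univ (⟨0, hj⟩ : Fin j))]
  congr 1
  apply Finset.prod_congr rfl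
  intro p hp
  have : (p : ℕ) ≠ 0 := fun hc => (Finset.mem_erase.mp hp).1 (Fin.ext hc)
  rw [if_neg this]

end HessAux

open HessAux

/-- a block upper Hessenberg matrix `H` with invertible subdiagonal
blocks is a linearization of its block characteristic polynomial `Λ` w.r.t. `E₁`
with leading coefficient `Γ₂⁻¹ ⋯ Γⱼ⁻¹`: there are matrix functions `G, F`,
invertible at every eigenvalue of `H`, bringing `λI − H` to block anti-triangular
form with `Λ(λ)` in the top-right block and `−Γ₂, …, −Γⱼ` on the subdiagonal;
in particular `det(λI − H) = c · det Λ(λ)` for a nonzero constant `c`. -/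
theorem hessenberg_is_linearization {j s : ℕ} (hj : 0 < j)
    (H : Matrix (Fin j × Fin s) (Fin j × Fin s) ℂ) (hH : BUH H)
    (hinv : ∀ i : ℕ, 2 ≤ i → i ≤ j → IsUnit (Gam H i))
    (Λ : Polynomial (Mat s)) (hdeg : Λ.natDegree = j)
    (hlead : Λ.leadingCoeff =
      ((List.range (j - 1)).map (fun m => (Gam H (m + 2))⁻¹)).prod)
    (hann : act Λ H (blkE (⟨0, hj⟩ : Fin j)) = 0) :
    ∃ (G F : ℂ → Matrix (Fin j × Fin s) (Fin j × Fin s) ℂ) (c : ℂ), c ≠ 0 ∧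
      (∀ θ : ℂ, (θ • (1 : Matrix (Fin j × Fin s) (Fin j × Fin s) ℂ) - H).det = 0 →
        IsUnit (G θ) ∧ IsUnit (F θ)) ∧
      (∀ z : ℂ,
        blk (G z * (z • 1 - H) * F z) ⟨0, hj⟩ ⟨j - 1, by omega⟩ = evalS Λ z ∧
        (∀ (m : ℕ) (hm : m + 1 < j),
          blk (G z * (z • 1 - H) * F z) ⟨m + 1, hm⟩ ⟨m, by omega⟩ =
            -(blk H ⟨m + 1, hm⟩ ⟨m, by omega⟩)) ∧
        (∀ p q : Fin j, (p : ℕ) ≠ (q : ℕ) + 1 → ¬((p : ℕ) = 0 ∧ (q : ℕ) = j - 1) →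
          blk (G z * (z • 1 - H) * F z) p q = 0)) ∧
      (∀ z : ℂ, (z • (1 : Matrix (Fin j × Fin s) (Fin j × Fin s) ℂ) - H).det =
        c * (evalS Λ z).det) := by
  classical
  set τ : Equiv.Perm (Fin j × Fin s) :=
    Equiv.prodCongr (finRotate j) (Equiv.refl (Fin s)) with hτ
  refine ⟨Gm hj Λ H, Fm hj Λ H,
    ((Equiv.Perm.sign τ : ℤ) : ℂ) *
      ∏ p ∈ Finset.univ.erase (⟨0, hj⟩ : Fin j), (-(Gam H ((p : ℕ) + 1))).det,
    ?_, ?_, ?_, ?_⟩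
  · apply mul_ne_zero
    · rcases Int.units_eq_one_or (Equiv.Perm.sign τ) with h | h <;> rw [h] <;> norm_num
    · rw [Finset.prod_ne_zero_iff]
      intro p hp
      have h1 : 1 ≤ (p : ℕ) := by
        rcases Nat.eq_zero_or_pos (p : ℕ) with h | h
        · exact absurd (Fin.ext h) (Finset.mem_erase.mp hp).1
        · exact h
      have hpj := p.isLt
      have hu : IsUnit (-(Gam H ((p : ℕ) + 1))) :=
        (hinv ((p : ℕ) + 1) (by omega) (by omega)).neg
      exact ((Matrix.isUnit_iff_isUnit_det _).mp hu).ne_zero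
  · intro θ _
    exact ⟨(Matrix.isUnit_iff_isUnit_det _).mpr
        (by rw [G_det]; exact isUnit_one),
      (Matrix.isUnit_iff_isUnit_det _).mpr
        (by rw [F_det hj Λ H hH hinv hdeg hlead]; exact isUnit_one)⟩
  · intro z
    have hassoc : Gm hj Λ H z * (z • 1 - H) * Fm hj Λ H z
        = Gm hj Λ H z * ((z • 1 - H) * Fm hj Λ H z) := Matrix.mul_assoc _ _ _
    refine ⟨?_, ?_, ?_⟩
    · rw [hassoc, blk_GMF hj Λ H hH hinv hann z]
      simp only [Fin.val_mk]
      rw [Nat.sub_add_cancel hj, Nat.mod_self]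
      simp
    · intro m hm
      rw [hassoc, blk_GMF hj Λ H hH hinv hann z]
      simp only [Fin.val_mk]
      rw [Nat.mod_eq_of_lt hm, if_pos rfl, if_neg (Nat.succ_ne_zero m)]
      rw [Gam, dif_pos ⟨by omega, by omega⟩]
      rfl
    · intro p q hne hne2
      rw [hassoc, blk_GMF hj Λ H hH hinv hann z]
      by_cases hql : (q : ℕ) = j - 1
      · rw [show ((q : ℕ) + 1) % j = 0 by rw [show (q : ℕ) + 1 = j by omega, Nat.mod_self]]
        by_cases hp0 : (p : ℕ) = 0
        · exact absurd ⟨hp0, hql⟩ hne2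
        · rw [if_neg hp0]
      · have hqj := q.isLt
        rw [Nat.mod_eq_of_lt (by omega), if_neg hne]
  · intro z
    have h1 : (Gm hj Λ H z * ((z • 1 - H) * Fm hj Λ H z)).det
        = (z • (1 : Matrix (Fin j × Fin s) (Fin j × Fin s) ℂ) - H).det := by
      rw [Matrix.det_mul, Matrix.det_mul, G_det, F_det hj Λ H hH hinv hdeg hlead,
        one_mul, mul_one]
    rw [← h1, GMF_eq hj Λ H hH hinv hann z, ← hτ, Matrix.det_permute',
      det_Dmat hj Λ H z]
    ring
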